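/- With the structure functions f_{i,j}(z), for integers i, j, k with i ≥ 1, j ≥ 1, i − k ≥ 1, j + k ≥ 1 the identity f_{1,i}(z)·f_{1,j}(x^{i−j−2k} z) = f_{1,i−k}(x^{−k} z)·f_{1,j+k}(x^{i−j−k} z) holds as formal power series in z. -/

import Mathlib

open PowerSeries

/-- `[s]_x = (x^s − x^{−s})/(x − x^{−1})` for real `s` (via complex powers). -/
noncomputable def qnum (x : ℂ) (s : ℝ) : ℂ := (x ^ (s : ℂ) - x ^ (-s : ℂ)) / (x - x⁻¹)

/-- Formal exponential of a power series (its `n`-th coefficient is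
`Σ_k (1/k!)·coeff_n(f^k)`; for `f` with zero constant term this is the usual
exponential `exp(f) = Σ_k f^k/k!`). -/
noncomputable def expPS (f : PowerSeries ℂ) : PowerSeries ℂ :=
  PowerSeries.mk fun n => ∑' k : ℕ, ((Nat.factorial k : ℂ))⁻¹ * (PowerSeries.coeff n) (f ^ k)

/-- The structure function
`f_{i,j}(z) = exp(−Σ_{m≥1} (1/m)[(r−1)m]_x[rm]_x(x−x^{−1})²·
  [min(i,j)m]_x([(N+1−max(i,j))m]_x − [(N−max(i,j))m]_x)/([m]_x([(N+1)m]_x−[Nm]_x))·z^m)`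
as a formal power series in `z`. -/
noncomputable def fps (x : ℂ) (r : ℝ) (N : ℕ) (i j : ℤ) : PowerSeries ℂ :=
  expPS (PowerSeries.mk fun m =>
    if m = 0 then 0 else
      -((1 / (m : ℂ)) * qnum x ((r - 1) * m) * qnum x (r * m) * (x - x⁻¹) ^ 2 *
        (qnum x ((min i j : ℤ) * m) *
            (qnum x (((N : ℤ) + 1 - max i j) * m) - qnum x (((N : ℤ) - max i j) * m)) /
          (qnum x (m : ℤ) * (qnum x (((N : ℤ) + 1) * m) - qnum x ((N : ℤ) * m))))))

/-- The formal power series expansion of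
`Δ(z) = (1 − x^{2r−1}z)(1 − x^{−2r+1}z)/((1 − xz)(1 − x^{−1}z))`. -/
noncomputable def Δps (x : ℂ) (r : ℝ) : PowerSeries ℂ :=
  (1 - PowerSeries.C (x ^ ((2 * r - 1 : ℝ) : ℂ)) * PowerSeries.X) *
    (1 - PowerSeries.C (x ^ ((-2 * r + 1 : ℝ) : ℂ)) * PowerSeries.X) *
    PowerSeries.mk (fun n => x ^ n) * PowerSeries.mk (fun n => x⁻¹ ^ n)

section AuxLemmas
open Finset
lemma coeff_pow_eq_zero {f : PowerSeries ℂ} (hf : constantCoeff f = 0) :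
    ∀ (k n : ℕ), n < k → coeff n (f ^ k) = 0 := by
  intro k
  induction k with
  | zero => intro n h; omega
  | succ k ih =>
    intro n h
    rw [pow_succ, coeff_mul]
    apply Finset.sum_eq_zero
    rintro ⟨p, q⟩ hpq
    rw [Finset.HasAntidiagonal.mem_antidiagonal] at hpq
    by_cases hp : p < k
    · simp [ih p hp]
    · have hq : q = 0 := by omega
      subst hq
      simp [coeff_zero_eq_constantCoeff, hf]

lemma coeff_expPS {f : PowerSeries ℂ} (hf : constantCoeff f = 0) (n : ℕ) :
    coeff n (expPS f) = ∑ k ∈ Finset.range (n + 1), ((Nat.factorial k : ℂ))⁻¹ * coeff n (f ^ k) := by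
  rw [expPS, coeff_mk]
  apply tsum_eq_sum
  intro k hk
  rw [Finset.mem_range, not_lt] at hk
  rw [coeff_pow_eq_zero hf k n (by omega), mul_zero]

lemma rescale_expPS (c : ℂ) (f : PowerSeries ℂ) :
    PowerSeries.rescale c (expPS f) = expPS (PowerSeries.rescale c f) := by
  ext n
  simp only [expPS, coeff_rescale, coeff_mk, ← map_pow, ← tsum_mul_left]
  congr 1
  ext k
  ring

lemma expPS_mul {f g : PowerSeries ℂ} (hf : constantCoeff f = 0) (hg : constantCoeff g = 0) :
    expPS (f + g) = expPS f * expPS g := by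
  have hfg : constantCoeff (f + g) = 0 := by simp [hf, hg]
  ext n
  set G : ℕ × ℕ → ℂ := fun ab =>
    ((Nat.factorial ab.1 : ℂ))⁻¹ * ((Nat.factorial ab.2 : ℂ))⁻¹ * coeff n (f ^ ab.1 * g ^ ab.2)
    with hG
  have hGzero : ∀ a b : ℕ, n < a + b → G (a, b) = 0 := by
    intro a b hab
    have : coeff n (f ^ a * g ^ b) = 0 := by
      rw [coeff_mul]
      apply Finset.sum_eq_zero
      rintro ⟨p, q⟩ hpq
      rw [Finset.HasAntidiagonal.mem_antidiagonal] at hpq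
      by_cases hp : p < a
      · rw [coeff_pow_eq_zero hf a p hp, zero_mul]
      · rw [coeff_pow_eq_zero hg b q (by omega), mul_zero]
    simp [hG, this]
  have hL : coeff n (expPS (f + g)) =
      ∑ a ∈ range (n + 1), ∑ b ∈ range (n + 1), G (a, b) := by
    rw [coeff_expPS hfg n]
    have step1 : ∀ k ∈ range (n + 1),
        ((Nat.factorial k : ℂ))⁻¹ * coeff n ((f + g) ^ k)
          = ∑ a ∈ range (k + 1), G (a, k - a) := by
      intro k _
      rw [Commute.add_pow (Commute.all f g), map_sum, Finset.mul_sum]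
      apply Finset.sum_congr rfl
      intro a ha
      rw [Finset.mem_range] at ha
      have ha' : a ≤ k := by omega
      have h0a : ((Nat.factorial a : ℂ)) ≠ 0 := Nat.cast_ne_zero.mpr (Nat.factorial_ne_zero a)
      have h0ka : ((Nat.factorial (k-a) : ℂ)) ≠ 0 := Nat.cast_ne_zero.mpr (Nat.factorial_ne_zero _)
      have h0k : ((Nat.factorial k : ℂ)) ≠ 0 := Nat.cast_ne_zero.mpr (Nat.factorial_ne_zero k)
      have h2 : ((Nat.choose k a : ℂ)) * (Nat.factorial a : ℂ) * (Nat.factorial (k - a) : ℂ)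
          = (Nat.factorial k : ℂ) := by
        exact_mod_cast congrArg (Nat.cast : ℕ → ℂ) (Nat.choose_mul_factorial_mul_factorial ha')
      have hfact : ((Nat.factorial k : ℂ))⁻¹ * (Nat.choose k a : ℂ) =
          ((Nat.factorial a : ℂ))⁻¹ * ((Nat.factorial (k - a) : ℂ))⁻¹ := by
        field_simp
        linear_combination h2
      rw [← map_natCast C (Nat.choose k a), coeff_mul_C]
      rw [hG]
      simp only []
      rw [← hfact]
      ring
    rw [Finset.sum_congr rfl step1]
    rw [Finset.sum_congr rfl (fun k _ =>
      (Finset.Nat.sum_antidiagonal_eq_sum_range_succ_mk G k).symm)]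
    rw [← Finset.sum_biUnion]
    · rw [← Finset.sum_product']
      apply Finset.sum_subset
      · rintro ⟨a, b⟩ hab
        rw [Finset.mem_biUnion] at hab
        obtain ⟨k, hk, hab⟩ := hab
        rw [Finset.mem_range] at hk
        rw [Finset.HasAntidiagonal.mem_antidiagonal] at hab
        simp only [Finset.mem_product, Finset.mem_range]
        omega
      · rintro ⟨a, b⟩ hab hnot
        rw [Finset.mem_product, Finset.mem_range, Finset.mem_range] at hab
        apply hGzero
        by_contra hle
        push_neg at hle
        exact hnot (Finset.mem_biUnion.mpr ⟨a + b, Finset.mem_range.mpr (by omega),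
          Finset.HasAntidiagonal.mem_antidiagonal.mpr rfl⟩)
    · intro k₁ _ k₂ _ hne
      apply Finset.disjoint_left.mpr
      rintro ⟨a, b⟩ h1 h2
      rw [Finset.HasAntidiagonal.mem_antidiagonal] at h1 h2
      omega
  rw [hL, coeff_mul]
  have hR : ∀ pq ∈ Finset.HasAntidiagonal.antidiagonal n,
      coeff pq.1 (expPS f) * coeff pq.2 (expPS g)
        = ∑ a ∈ range (n + 1), ∑ b ∈ range (n + 1),
            (((Nat.factorial a : ℂ))⁻¹ * coeff pq.1 (f ^ a)) *
            (((Nat.factorial b : ℂ))⁻¹ * coeff pq.2 (g ^ b)) := by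
    rintro ⟨p, q⟩ hpq
    rw [Finset.HasAntidiagonal.mem_antidiagonal] at hpq
    rw [coeff_expPS hf p, coeff_expPS hg q]
    rw [Finset.sum_subset (Finset.range_subset_range.mpr (by omega : p + 1 ≤ n + 1))
      (fun a _ ha => by rw [Finset.mem_range, not_lt] at ha
                        rw [coeff_pow_eq_zero hf a p (by omega), mul_zero])]
    rw [Finset.sum_subset (Finset.range_subset_range.mpr (by omega : q + 1 ≤ n + 1))
      (fun b _ hb => by rw [Finset.mem_range, not_lt] at hb
                        rw [coeff_pow_eq_zero hg b q (by omega), mul_zero])]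
    rw [Finset.sum_mul_sum]
  rw [Finset.sum_congr rfl hR]
  conv_rhs => rw [Finset.sum_comm]
  apply Finset.sum_congr rfl
  intro a _
  conv_rhs => rw [Finset.sum_comm]
  apply Finset.sum_congr rfl
  intro b _
  rw [hG]
  simp only []
  rw [coeff_mul, Finset.mul_sum]
  apply Finset.sum_congr rfl
  intro pq _
  ring

lemma qnum_int_mul (x : ℂ) (t : ℤ) (m : ℕ) :
    qnum x ((t : ℝ) * (m : ℝ)) = ((x ^ (m : ℤ)) ^ t - (x ^ (m : ℤ)) ^ (-t)) / (x - x⁻¹) := by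
  unfold qnum
  have h1 : (((t : ℝ) * (m : ℝ) : ℝ) : ℂ) = (((m : ℤ) * t : ℤ) : ℂ) := by push_cast; ring
  rw [h1]
  have h2 : (-((((m : ℤ) * t : ℤ)) : ℂ)) = (((m : ℤ) * (-t) : ℤ) : ℂ) := by push_cast; ring
  rw [h2, Complex.cpow_intCast, Complex.cpow_intCast, zpow_mul, zpow_mul]

lemma zpow_key {y : ℂ} (hy : y ≠ 0) (N' i j k : ℤ) :
    ((y ^ (N' + 1 - i) - y ^ (-(N' + 1 - i))) - (y ^ (N' - i) - y ^ (-(N' - i))))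
      + y ^ (i - j - 2 * k) *
        ((y ^ (N' + 1 - j) - y ^ (-(N' + 1 - j))) - (y ^ (N' - j) - y ^ (-(N' - j))))
    = y ^ (-k) *
        ((y ^ (N' + 1 - (i - k)) - y ^ (-(N' + 1 - (i - k))))
          - (y ^ (N' - (i - k)) - y ^ (-(N' - (i - k)))))
      + y ^ (i - j - k) *
        ((y ^ (N' + 1 - (j + k)) - y ^ (-(N' + 1 - (j + k))))
          - (y ^ (N' - (j + k)) - y ^ (-(N' - (j + k))))) := by
  simp only [mul_sub, ← zpow_add₀ hy]
  ring_nf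


end AuxLemmas

/-- `f_{1,i}(z)·f_{1,j}(x^{i−j−2k} z) = f_{1,i−k}(x^{−k} z)·f_{1,j+k}(x^{i−j−k} z)`
for `i, j, i−k, j+k ≥ 1`. -/
theorem fps_shift_fusion (x : ℂ) (hx0 : x ≠ 0) (hx1 : ‖x‖ < 1)
    (r : ℝ) (hr : 1 < r) (N : ℕ) (hN : 1 ≤ N) (i j k : ℤ)
    (hi : 1 ≤ i) (hj : 1 ≤ j) (hik : 1 ≤ i - k) (hjk : 1 ≤ j + k) :
    fps x r N 1 i * PowerSeries.rescale (x ^ (i - j - 2 * k)) (fps x r N 1 j) =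
      PowerSeries.rescale (x ^ (-k)) (fps x r N 1 (i - k)) *
        PowerSeries.rescale (x ^ (i - j - k)) (fps x r N 1 (j + k)) := by
  unfold fps
  rw [rescale_expPS, rescale_expPS, rescale_expPS]
  rw [← expPS_mul (by simp [constantCoeff_mk]) (by simp [coeff_zero_eq_constantCoeff.symm, coeff_rescale, constantCoeff_mk]),
      ← expPS_mul (by simp [coeff_zero_eq_constantCoeff.symm, coeff_rescale, constantCoeff_mk]) (by simp [coeff_zero_eq_constantCoeff.symm, coeff_rescale, constantCoeff_mk])]
  refine congrArg expPS ?_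
  ext m
  simp only [map_add, coeff_rescale, coeff_mk]
  by_cases hm : m = 0
  · simp [hm]
  · simp only [hm, if_false]
    rw [min_eq_left hi, max_eq_right hi, min_eq_left hj, max_eq_right hj,
        min_eq_left hik, max_eq_right hik, min_eq_left hjk, max_eq_right hjk]
    have hy : x ^ (m:ℤ) ≠ 0 := zpow_ne_zero _ hx0
    have hpow : ∀ a : ℤ, (x ^ a) ^ m = (x ^ (m:ℤ)) ^ a := fun a => by
      rw [← zpow_natCast (x ^ a) m, ← zpow_mul, mul_comm a (m:ℤ), zpow_mul]
    have A1 : (((N:ℤ):ℝ) + 1 - (i:ℝ)) * (m:ℝ) = ((((N:ℤ) + 1 - i : ℤ)):ℝ) * (m:ℝ) := by push_cast; ring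
    have A2 : (((N:ℤ):ℝ) - (i:ℝ)) * (m:ℝ) = ((((N:ℤ) - i : ℤ)):ℝ) * (m:ℝ) := by push_cast; ring
    have A3 : (((N:ℤ):ℝ) + 1 - (j:ℝ)) * (m:ℝ) = ((((N:ℤ) + 1 - j : ℤ)):ℝ) * (m:ℝ) := by push_cast; ring
    have A4 : (((N:ℤ):ℝ) - (j:ℝ)) * (m:ℝ) = ((((N:ℤ) - j : ℤ)):ℝ) * (m:ℝ) := by push_cast; ring
    have A5 : (((N:ℤ):ℝ) + 1 - ((i - k : ℤ):ℝ)) * (m:ℝ) = ((((N:ℤ) + 1 - (i - k) : ℤ)):ℝ) * (m:ℝ) := by push_cast; ring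
    have A6 : (((N:ℤ):ℝ) - ((i - k : ℤ):ℝ)) * (m:ℝ) = ((((N:ℤ) - (i - k) : ℤ)):ℝ) * (m:ℝ) := by push_cast; ring
    have A7 : (((N:ℤ):ℝ) + 1 - ((j + k : ℤ):ℝ)) * (m:ℝ) = ((((N:ℤ) + 1 - (j + k) : ℤ)):ℝ) * (m:ℝ) := by push_cast; ring
    have A8 : (((N:ℤ):ℝ) - ((j + k : ℤ):ℝ)) * (m:ℝ) = ((((N:ℤ) - (j + k) : ℤ)):ℝ) * (m:ℝ) := by push_cast; ring
    rw [A1, A2, A3, A4, A5, A6, A7, A8, hpow, hpow, hpow,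
        qnum_int_mul x ((N:ℤ) + 1 - i) m, qnum_int_mul x ((N:ℤ) - i) m,
        qnum_int_mul x ((N:ℤ) + 1 - j) m, qnum_int_mul x ((N:ℤ) - j) m,
        qnum_int_mul x ((N:ℤ) + 1 - (i - k)) m, qnum_int_mul x ((N:ℤ) - (i - k)) m,
        qnum_int_mul x ((N:ℤ) + 1 - (j + k)) m, qnum_int_mul x ((N:ℤ) - (j + k)) m]
    linear_combination (-(1 / (m:ℂ) * qnum x ((r - 1) * (m:ℝ)) * qnum x (r * (m:ℝ)) * (x - x⁻¹) ^ 2 *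
        (qnum x (((1:ℤ):ℝ) * (m:ℝ)) /
          (qnum x (((m:ℤ)):ℝ) * (qnum x ((((N:ℤ):ℝ) + 1) * (m:ℝ)) - qnum x (((N:ℤ):ℝ) * (m:ℝ)))))) / (x - x⁻¹)) *
      zpow_key hy (N:ℤ) i j k
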